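/- Let m > 0, p > 1 with γ := m(p-1) - 1 > 0, c* > 0, and suppose Z : (0,δ) → (0,∞) is continuous with Z(X) → c*^{1/(p-1)} as X → 0⁺. Let X : (ξ₁, ξ₀) → (0, δ) be a C¹ decreasing solution of -m dX/dξ = X^{1-γ/(p-1)} Z(X) with X(ξ) → 0 as ξ → ξ₀⁻. Then ξ₀ is finite whenever ξ₁ is finite and moreover X(ξ)^{γ/(p-1)} / (ξ₀ - ξ) converges to the positive constant γ c*^{1/(p-1)} / (m(p-1)) as ξ → ξ₀⁻. In particular the profile vanishes in finite 'time' ξ₀ and obeys the Darcy-type behaviour φ(ξ)^{γ/(p-1)} ∼ const·(ξ₀ - ξ). -/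

import Mathlib

open Real Set Filter

/-- Free-boundary (Darcy law) behaviour of finite travelling waves in the slow
diffusion range `γ > 0`: if `Z → c*^{1/(p-1)} > 0` as `X → 0⁺` and the decreasing
profile `X(ξ)` solves `-m X' = X^{1-γ/(p-1)} Z(X)` with `X → 0` as `ξ → ξ₀⁻`, then
`X(ξ)^{γ/(p-1)}/(ξ₀ - ξ) → γ c*^{1/(p-1)}/(m(p-1))` as `ξ → ξ₀⁻`. -/
theorem stmt_8 (m p γ cstar δ ξ₀ ξ₁ : ℝ) (hm : 0 < m) (hp : 1 < p)
    (hγ : γ = m * (p - 1) - 1) (hγpos : 0 < γ) (hcstar : 0 < cstar) (hδ : 0 < δ)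
    (hξ : ξ₁ < ξ₀)
    (Z : ℝ → ℝ) (hZcont : ContinuousOn Z (Ioo 0 δ))
    (hZpos : ∀ s ∈ Ioo (0:ℝ) δ, 0 < Z s)
    (hZlim : Tendsto Z (nhdsWithin 0 (Ioi 0)) (nhds (cstar ^ (1 / (p - 1)))))
    (X : ℝ → ℝ) (hXrange : ∀ ξ ∈ Ioo ξ₁ ξ₀, X ξ ∈ Ioo (0:ℝ) δ)
    (hXdec : StrictAntiOn X (Ioo ξ₁ ξ₀))
    (hXode : ∀ ξ ∈ Ioo ξ₁ ξ₀,
      HasDerivAt X (-(X ξ ^ (1 - γ / (p - 1)) * Z (X ξ)) / m) ξ)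
    (hXlim : Tendsto X (nhdsWithin ξ₀ (Iio ξ₀)) (nhds 0)) :
    Tendsto (fun ξ => X ξ ^ (γ / (p - 1)) / (ξ₀ - ξ)) (nhdsWithin ξ₀ (Iio ξ₀))
      (nhds (γ * cstar ^ (1 / (p - 1)) / (m * (p - 1)))) := by
  have hq : (0:ℝ) < p - 1 := by linarith
  set α : ℝ := γ / (p - 1) with hαdef
  have hα : 0 < α := div_pos hγpos hq
  set C : ℝ := cstar ^ (1 / (p - 1)) with hCdef
  have hC : 0 < C := Real.rpow_pos_of_pos hcstar _
  set L : ℝ := γ * C / (m * (p - 1)) with hLdef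
  have hL : L = α / m * C := by
    rw [hLdef, hαdef]; field_simp
  -- derivative of W := X ^ α
  have hW' : ∀ ξ ∈ Ioo ξ₁ ξ₀, HasDerivAt (fun t => X t ^ α) (-(α / m * Z (X ξ))) ξ := by
    intro ξ hmem
    have hX0 : 0 < X ξ := (hXrange ξ hmem).1
    have h1 := (hXode ξ hmem).rpow_const (p := α) (Or.inl (ne_of_gt hX0))
    convert h1 using 1
    have hone : X ξ ^ (1 - α) * X ξ ^ (α - 1) = 1 := by
      rw [← Real.rpow_add hX0]
      norm_num
    have h2 : -(X ξ ^ (1 - α) * Z (X ξ)) / m * α * X ξ ^ (α - 1)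
        = -(α / m * Z (X ξ)) * (X ξ ^ (1 - α) * X ξ ^ (α - 1)) := by
      ring
    rw [h2, hone, mul_one]
  -- limit of W at ξ₀ from the left
  have hWlim : Tendsto (fun t => X t ^ α) (nhdsWithin ξ₀ (Iio ξ₀)) (nhds 0) := by
    have := hXlim.rpow_const (p := α) (Or.inr hα.le)
    rwa [Real.zero_rpow (ne_of_gt hα)] at this
  rw [Metric.tendsto_nhds]
  intro ε hε
  -- choose η so that Z is within ε' of C on (0, η)
  have hε' : 0 < ε / 2 * m / α := by positivity
  have hball := hZlim (Metric.ball_mem_nhds C hε')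
  obtain ⟨η, hη0, hηsub⟩ := mem_nhdsGT_iff_exists_Ioo_subset.mp hball
  -- choose ξ' so that X < η on (ξ', ξ₀)
  have hXev := hXlim (Iio_mem_nhds hη0)
  obtain ⟨ξa, hξa, hξasub⟩ := mem_nhdsLT_iff_exists_Ioo_subset.mp hXev
  set b₀ : ℝ := max ξa ξ₁ with hb₀def
  have hb₀lt : b₀ < ξ₀ := max_lt hξa hξ
  have hb₀sub : Ioo b₀ ξ₀ ⊆ Ioo ξ₁ ξ₀ := fun s hs => ⟨lt_of_le_of_lt (le_max_right _ _) hs.1, hs.2⟩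
  have hkey : ∀ s ∈ Ioo b₀ ξ₀, |α / m * Z (X s) - L| ≤ ε / 2 := by
    intro s hs
    have hs' : s ∈ Ioo ξ₁ ξ₀ := hb₀sub hs
    have hX0 : 0 < X s := (hXrange s hs').1
    have hXlt : X s < η := hξasub ⟨lt_of_le_of_lt (le_max_left _ _) hs.1, hs.2⟩
    have hd : dist (Z (X s)) C < ε / 2 * m / α := hηsub ⟨hX0, hXlt⟩
    rw [Real.dist_eq] at hd
    have : α / m * Z (X s) - L = α / m * (Z (X s) - C) := by rw [hL]; ring
    rw [this, abs_mul, abs_of_pos (by positivity : (0:ℝ) < α / m)]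
    have h3 : α / m * |Z (X s) - C| ≤ α / m * (ε / 2 * m / α) := by
      apply mul_le_mul_of_nonneg_left hd.le (by positivity)
    calc α / m * |Z (X s) - C| ≤ α / m * (ε / 2 * m / α) := h3
      _ = ε / 2 := by field_simp
  -- two-sided bound on W a
  have hbound : ∀ a ∈ Ioo b₀ ξ₀,
      (L - ε / 2) * (ξ₀ - a) ≤ X a ^ α ∧ X a ^ α ≤ (L + ε / 2) * (ξ₀ - a) := by
    intro a ha
    have hstep : ∀ b ∈ Ico a ξ₀,
        (L - ε / 2) * (b - a) ≤ X a ^ α - X b ^ α ∧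
        X a ^ α - X b ^ α ≤ (L + ε / 2) * (b - a) := by
      intro b hb
      have hIcc : Icc a b ⊆ Ioo b₀ ξ₀ := fun t ht =>
        ⟨lt_of_lt_of_le ha.1 ht.1, lt_of_le_of_lt ht.2 hb.2⟩
      have hIoo : Ioo a b ⊆ Ioo b₀ ξ₀ := fun t ht => hIcc ⟨ht.1.le, ht.2.le⟩
      have hcont : ∀ t ∈ Icc a b, ContinuousAt (fun t => X t ^ α) t := fun t ht =>
        (hW' t (hb₀sub (hIcc ht))).continuousAt
      have hintv : interior (Icc a b) = Ioo a b := interior_Icc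
      -- upper bound via monotonicity of g := W + (L + ε/2) • id
      have hmono : MonotoneOn (fun t => X t ^ α + (L + ε / 2) * t) (Icc a b) := by
        apply monotoneOn_of_deriv_nonneg (convex_Icc a b)
        · exact fun t ht => ((hcont t ht).add (by fun_prop)).continuousWithinAt
        · intro t ht
          rw [hintv] at ht
          have hid : HasDerivAt (fun x : ℝ => (L + ε / 2) * x) (L + ε / 2) t := by
            simpa using (hasDerivAt_id t).const_mul (L + ε / 2)
          exact (((hW' t (hb₀sub (hIoo ht))).add hid).differentiableAt).differentiableWithinAt
        · intro t ht
          rw [hintv] at ht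
          have hid : HasDerivAt (fun x : ℝ => (L + ε / 2) * x) (L + ε / 2) t := by
            simpa using (hasDerivAt_id t).const_mul (L + ε / 2)
          have hd : HasDerivAt (fun t => X t ^ α + (L + ε / 2) * t) _ t := (hW' t (hb₀sub (hIoo ht))).add hid
          rw [hd.deriv]
          have := abs_le.mp (hkey t (hIoo ht))
          linarith [this.2]
      have hanti : AntitoneOn (fun t => X t ^ α + (L - ε / 2) * t) (Icc a b) := by
        apply antitoneOn_of_deriv_nonpos (convex_Icc a b)
        · exact fun t ht => ((hcont t ht).add (by fun_prop)).continuousWithinAt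
        · intro t ht
          rw [hintv] at ht
          have hid : HasDerivAt (fun x : ℝ => (L - ε / 2) * x) (L - ε / 2) t := by
            simpa using (hasDerivAt_id t).const_mul (L - ε / 2)
          exact (((hW' t (hb₀sub (hIoo ht))).add hid).differentiableAt).differentiableWithinAt
        · intro t ht
          rw [hintv] at ht
          have hid : HasDerivAt (fun x : ℝ => (L - ε / 2) * x) (L - ε / 2) t := by
            simpa using (hasDerivAt_id t).const_mul (L - ε / 2)
          have hd : HasDerivAt (fun t => X t ^ α + (L - ε / 2) * t) _ t := (hW' t (hb₀sub (hIoo ht))).add hid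
          rw [hd.deriv]
          have := abs_le.mp (hkey t (hIoo ht))
          linarith [this.1]
      have hab : a ≤ b := hb.1
      have hmem_a : a ∈ Icc a b := ⟨le_refl _, hab⟩
      have hmem_b : b ∈ Icc a b := ⟨hab, le_refl _⟩
      have h1 := hmono hmem_a hmem_b hab
      have h2 := hanti hmem_a hmem_b hab
      constructor <;> dsimp at h1 h2 <;> nlinarith
    have haξ : a < ξ₀ := ha.2
    have hIcoMem : Ico a ξ₀ ∈ nhdsWithin ξ₀ (Iio ξ₀) :=
      Ico_mem_nhdsLT_of_mem ⟨haξ, le_refl _⟩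
    have htb : Tendsto (fun b => (b : ℝ)) (nhdsWithin ξ₀ (Iio ξ₀)) (nhds ξ₀) :=
      tendsto_id.mono_left nhdsWithin_le_nhds
    have hlhs : ∀ c : ℝ, Tendsto (fun b => c * (b - a)) (nhdsWithin ξ₀ (Iio ξ₀))
        (nhds (c * (ξ₀ - a))) := fun c => (htb.sub_const a).const_mul c
    have hrhs : Tendsto (fun b => X a ^ α - X b ^ α) (nhdsWithin ξ₀ (Iio ξ₀))
        (nhds (X a ^ α)) := by
      have := (tendsto_const_nhds (α := ℝ) (x := X a ^ α)).sub hWlim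
      rwa [sub_zero] at this
    constructor
    · refine le_of_tendsto_of_tendsto (hlhs (L - ε / 2)) hrhs ?_
      filter_upwards [hIcoMem] with b hb using (hstep b hb).1
    · refine le_of_tendsto_of_tendsto hrhs (hlhs (L + ε / 2)) ?_
      filter_upwards [hIcoMem] with b hb using (hstep b hb).2
  -- conclude
  filter_upwards [Ioo_mem_nhdsLT_of_mem (⟨hb₀lt, le_refl _⟩ : ξ₀ ∈ Ioc b₀ ξ₀)] with ξ hξm
  have hpos : 0 < ξ₀ - ξ := sub_pos.mpr hξm.2
  obtain ⟨hlo, hhi⟩ := hbound ξ hξm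
  have hlo' : L - ε / 2 ≤ X ξ ^ α / (ξ₀ - ξ) := (le_div_iff₀ hpos).mpr hlo
  have hhi' : X ξ ^ α / (ξ₀ - ξ) ≤ L + ε / 2 := (div_le_iff₀ hpos).mpr hhi
  rw [Real.dist_eq, abs_sub_lt_iff]
  constructor <;> linarith
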